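/- arXiv:2111.14918 — 9 statements merged into one kernel-verified Lean document; each statement's English description precedes it below -/
import Mathlib

section
/- Let X be a real normed space, let D ⊆ X be a dense subset that is star-shaped in the sense that αD ⊆ D for every real α > 0, and let M ⊆ X be a closed affine hyperplane (an affine subspace of codimension one) with 0 ∉ M. Then the closure of M ∩ D equals M. -/
open Pointwise

/-- **Lemma 2.1.** Let `X` be a real normed space, `D ⊆ X` a dense subset that is
star-shaped in the sense that `α • D ⊆ D` for every real `α > 0`, and `M` a closed affine
hyperplane (a nonempty closed affine subspace whose direction has codimension one, i.e. the
quotient of `X` by the direction is one-dimensional) with `0 ∉ M`. Then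
`cl(M ∩ D) = M`. -/
theorem closure_hyperplane_inter_dense_starShaped
    {X : Type*} [NormedAddCommGroup X] [NormedSpace ℝ X]
    (D : Set X) (hD : Dense D) (hstar : ∀ α : ℝ, 0 < α → α • D ⊆ D)
    (M : AffineSubspace ℝ X) (hMne : (M : Set X).Nonempty)
    (hMclosed : IsClosed (M : Set X))
    (hcodim : Module.finrank ℝ (X ⧸ M.direction) = 1)
    (h0 : (0 : X) ∉ M) :
    closure ((M : Set X) ∩ D) = (M : Set X) := by
  obtain ⟨x₀, hx₀⟩ := hMne
  -- a linear equivalence from the quotient to ℝ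
  have : Module.Finite ℝ (X ⧸ M.direction) :=
    Module.finite_of_finrank_eq_succ hcodim
  obtain ⟨e⟩ : Nonempty ((X ⧸ M.direction) ≃ₗ[ℝ] ℝ) :=
    FiniteDimensional.nonempty_linearEquiv_of_finrank_eq
      (by rw [hcodim, Module.finrank_self])
  set g : X →ₗ[ℝ] ℝ := e.toLinearMap ∘ₗ M.direction.mkQ with hg
  have hker : LinearMap.ker g = M.direction := by
    rw [hg, LinearMap.ker_comp, LinearEquiv.ker, Submodule.comap_bot,
      Submodule.ker_mkQ]
  -- the direction is closed
  have hdirclosed : IsClosed (M.direction : Set X) := by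
    rw [AffineSubspace.coe_direction_eq_vsub_set_right hx₀]
    have : ((· -ᵥ x₀) '' (M : Set X)) = (Homeomorph.subRight x₀) '' (M : Set X) := rfl
    rw [this]
    exact (Homeomorph.subRight x₀).isClosedMap _ hMclosed
  have hgcont : Continuous g := by
    rw [LinearMap.continuous_iff_isClosed_ker, hker]; exact hdirclosed
  -- membership characterization
  have hmem : ∀ x : X, x ∈ M ↔ g x = g x₀ := by
    intro x
    rw [← sub_eq_zero, ← map_sub, ← LinearMap.mem_ker, hker]
    constructor
    · intro hx; exact AffineSubspace.vsub_mem_direction hx hx₀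
    · intro hx
      have := AffineSubspace.vadd_mem_of_mem_direction hx hx₀
      simpa using this
  set c : ℝ := g x₀ with hc
  have hcne : c ≠ 0 := by
    intro h
    exact h0 ((hmem 0).2 (by simp [h]))
  apply subset_antisymm
  · calc closure ((M : Set X) ∩ D) ⊆ closure (M : Set X) :=
          closure_mono Set.inter_subset_left
      _ = (M : Set X) := hMclosed.closure_eq
  · intro x hx
    obtain ⟨u, huD, hu⟩ := mem_closure_iff_seq_limit.mp (hD x)
    have hgu : Filter.Tendsto (fun n => g (u n)) Filter.atTop (nhds c) := by
      have := (hgcont.tendsto x).comp hu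
      rwa [(hmem x).1 hx] at this
    set α : ℕ → ℝ := fun n => c / g (u n) with hα
    have hα1 : Filter.Tendsto α Filter.atTop (nhds 1) := by
      have := Filter.Tendsto.div (tendsto_const_nhds (x := c)) hgu hcne
      simpa [hα, div_self hcne, Pi.div_def] using this
    have hpos : ∀ᶠ n in Filter.atTop, 0 < α n :=
      hα1.eventually (eventually_gt_nhds one_pos)
    have htend : Filter.Tendsto (fun n => α n • u n) Filter.atTop (nhds x) := by
      have := hα1.smul hu
      simpa using this
    refine mem_closure_of_tendsto htend ?_
    filter_upwards [hpos] with n hn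
    constructor
    · have hgn : g (u n) ≠ 0 := by
        intro h
        rw [hα] at hn
        simp [h] at hn
      refine (hmem _).2 ?_
      simp only [map_smul, smul_eq_mul, hα]
      field_simp
    · exact hstar (α n) hn (Set.smul_mem_smul_set (huD n))
end

section
/- Let Z be a two-dimensional real normed space and let {x, y} ⊆ Z be a linearly independent set. Let M = {x + t·y : t ∈ ℝ} and let N_sm(Z) = {z ∈ Z : Z is smooth at z} ∪ {0}, where Z is smooth at z means that there is exactly one continuous linear functional f on Z with ‖f‖ = 1 and f(z) = ‖z‖. Then the closure of M ∩ N_sm(Z) equals M. -/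
/-- Slope monotonicity: supporting functionals at earlier points of the line have
smaller value on the direction `y`. -/
private lemma key_slope {Z : Type*} [NormedAddCommGroup Z] [NormedSpace ℝ Z]
    (x y : Z) {t t' : ℝ} (htt : t < t')
    (f f' : Z →L[ℝ] ℝ) (hf : ‖f‖ = 1) (hf' : ‖f'‖ = 1)
    (hft : f (x + t • y) = ‖x + t • y‖) (hft' : f' (x + t' • y) = ‖x + t' • y‖) :
    f y ≤ f' y := by
  have h1 : f (x + t' • y) ≤ ‖x + t' • y‖ := by
    calc f (x + t' • y) ≤ |f (x + t' • y)| := le_abs_self _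
    _ ≤ ‖f‖ * ‖x + t' • y‖ := f.le_opNorm _
    _ = ‖x + t' • y‖ := by rw [hf, one_mul]
  have h2 : f' (x + t • y) ≤ ‖x + t • y‖ := by
    calc f' (x + t • y) ≤ |f' (x + t • y)| := le_abs_self _
    _ ≤ ‖f'‖ * ‖x + t • y‖ := f'.le_opNorm _
    _ = ‖x + t • y‖ := by rw [hf', one_mul]
  have e1 : f (x + t' • y) = f (x + t • y) + (t' - t) * f y := by
    simp only [map_add, map_smul, smul_eq_mul]; ring
  have e2 : f' (x + t • y) = f' (x + t' • y) - (t' - t) * f' y := by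
    simp only [map_add, map_smul, smul_eq_mul]; ring
  rw [e1, hft] at h1
  rw [e2, hft'] at h2
  nlinarith

/-- **Lemma 2.2.** Let `Z` be a two-dimensional real normed space, `{x, y} ⊆ Z` linearly
independent, `M = {x + t·y : t ∈ ℝ}` and let `N_sm(Z)` be the set of smooth points of `Z`
(points `z` admitting a unique norm-one continuous linear functional `f` with `f z = ‖z‖`)
together with `0`. Then `cl(M ∩ N_sm(Z)) = M`. -/
theorem closure_line_inter_smoothPoints
    {Z : Type*} [NormedAddCommGroup Z] [NormedSpace ℝ Z]
    (hdim : Module.finrank ℝ Z = 2) (x y : Z)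
    (hxy : LinearIndependent ℝ ![x, y]) :
    closure ({z : Z | ∃ t : ℝ, z = x + t • y} ∩
        ({z : Z | ∃! f : Z →L[ℝ] ℝ, ‖f‖ = 1 ∧ f z = ‖z‖} ∪ {0})) =
      {z : Z | ∃ t : ℝ, z = x + t • y} := by
  have hfd : FiniteDimensional ℝ Z := FiniteDimensional.of_finrank_eq_succ hdim
  obtain ⟨hy0, hax⟩ := linearIndependent_fin2.mp hxy
  simp only [Matrix.cons_val_one, Matrix.head_cons, Matrix.cons_val_zero] at hy0 hax
  set M : Set Z := {z : Z | ∃ t : ℝ, z = x + t • y} with hM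
  -- every point of the line is nonzero
  have hne : ∀ t : ℝ, x + t • y ≠ 0 := by
    intro t h
    exact hax (-t) (by rw [neg_smul]; exact neg_eq_of_add_eq_zero_left h)
  -- the pair (x + t•y, y) spans Z
  have hspan : ∀ t : ℝ, Submodule.span ℝ {x + t • y, y} = ⊤ := by
    intro t
    have hind2 : LinearIndependent ℝ ![x + t • y, y] := by
      rw [linearIndependent_fin2]
      refine ⟨by simpa using hy0, fun a h => ?_⟩
      simp only [Matrix.cons_val_one, Matrix.head_cons, Matrix.cons_val_zero] at h
      apply hax (a - t)
      rw [sub_smul, h]; abel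
    have hr : Set.range ![x + t • y, y] = {x + t • y, y} := by
      simp [Matrix.range_cons, Matrix.range_empty, Set.pair_comm]
    have hfr := finrank_span_eq_card hind2
    rw [hr] at hfr
    apply Submodule.eq_top_of_finrank_eq
    rw [hdim, hfr]
    simp
  -- two functionals supporting at the same line point and agreeing on y are equal
  have huniq : ∀ t : ℝ, ∀ f g : Z →L[ℝ] ℝ,
      f (x + t • y) = ‖x + t • y‖ → g (x + t • y) = ‖x + t • y‖ → f y = g y → f = g := by
    intro t f g hfz hgz hfgy
    ext w
    have hw : w ∈ Submodule.span ℝ {x + t • y, y} := by rw [hspan t]; trivial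
    obtain ⟨a, b, rfl⟩ := Submodule.mem_span_pair.mp hw
    simp only [map_add, map_smul, smul_eq_mul, hfz, hgz, hfgy]
  -- the set of "bad" parameters
  set B : Set ℝ := {t : ℝ | ¬ ∃! f : Z →L[ℝ] ℝ, ‖f‖ = 1 ∧ f (x + t • y) = ‖x + t • y‖}
    with hB
  have key : ∀ t : ℝ, ∃ q : ℚ, t ∈ B →
      ∃ f₁ f₂ : Z →L[ℝ] ℝ, ‖f₁‖ = 1 ∧ f₁ (x + t • y) = ‖x + t • y‖ ∧
        ‖f₂‖ = 1 ∧ f₂ (x + t • y) = ‖x + t • y‖ ∧ f₁ y < (q : ℝ) ∧ (q : ℝ) < f₂ y := by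
    intro t
    by_cases ht : t ∈ B
    · obtain ⟨f, hf1, hf2⟩ := exists_dual_vector ℝ (x + t • y) (norm_ne_zero_iff.mpr (hne t))
      have : ∃ g : Z →L[ℝ] ℝ, (‖g‖ = 1 ∧ g (x + t • y) = ‖x + t • y‖) ∧ g ≠ f := by
        by_contra hcon
        push_neg at hcon
        exact ht ⟨f, ⟨hf1, hf2⟩, fun g hg => hcon g hg⟩
      obtain ⟨g, ⟨hg1, hg2⟩, hgf⟩ := this
      have hy : g y ≠ f y := fun h => hgf (huniq t g f hg2 hf2 h)
      rcases hy.lt_or_gt with h | h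
      · obtain ⟨q, hq1, hq2⟩ := exists_rat_btwn h
        exact ⟨q, fun _ => ⟨g, f, hg1, hg2, hf1, hf2, hq1, hq2⟩⟩
      · obtain ⟨q, hq1, hq2⟩ := exists_rat_btwn h
        exact ⟨q, fun _ => ⟨f, g, hf1, hf2, hg1, hg2, hq1, hq2⟩⟩
    · exact ⟨0, fun h => absurd h ht⟩
  choose q hq using key
  have hBc : B.Countable := by
    have hmono : ∀ a ∈ B, ∀ b ∈ B, a < b → q a < q b := by
      intro a ha b hb hab
      obtain ⟨f₁, f₂, hf₁1, hf₁2, hf₂1, hf₂2, hqa1, hqa2⟩ := hq a ha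
      obtain ⟨g₁, g₂, hg₁1, hg₁2, hg₂1, hg₂2, hqb1, hqb2⟩ := hq b hb
      have := key_slope x y hab f₂ g₁ hf₂1 hg₁1 hf₂2 hg₁2
      have : (q a : ℝ) < (q b : ℝ) := ((hqa2.trans_le this).trans hqb1)
      exact_mod_cast this
    have hinj : Set.InjOn q B := by
      intro a ha b hb hab
      rcases lt_trichotomy a b with h | h | h
      · exact absurd hab (hmono a ha b hb h).ne
      · exact h
      · exact absurd hab.symm (hmono b hb a ha h).ne
    exact (Set.mapsTo_univ q B).countable_of_injOn hinj Set.countable_univ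
  -- M is closed
  have hMclosed : IsClosed M := by
    have hMeq : M = (Homeomorph.addLeft x) '' (Submodule.span ℝ {y} : Set Z) := by
      ext z
      simp only [Set.mem_image, SetLike.mem_coe, Submodule.mem_span_singleton,
        Homeomorph.coe_addLeft, hM, Set.mem_setOf_eq]
      constructor
      · rintro ⟨t, rfl⟩; exact ⟨t • y, ⟨t, rfl⟩, rfl⟩
      · rintro ⟨w, ⟨t, rfl⟩, rfl⟩; exact ⟨t, rfl⟩
    rw [hMeq, Homeomorph.isClosed_image]
    exact Submodule.closed_of_finiteDimensional _
  refine subset_antisymm ((closure_mono Set.inter_subset_left).trans hMclosed.closure_eq.subset) ?_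
  · intro z hz
    obtain ⟨t₀, rfl⟩ := hz
    have hcont : Continuous (fun t : ℝ => x + t • y) := continuous_const.add (continuous_id.smul continuous_const)
    have ht₀ : t₀ ∈ closure Bᶜ := (hBc.dense_compl ℝ) t₀
    have himg := mem_closure_image hcont.continuousAt ht₀
    refine closure_mono ?_ himg
    rintro w ⟨t, ht, rfl⟩
    exact ⟨⟨t, rfl⟩, Or.inl (not_not.mp ht)⟩
end

section
/- Let X be a Hilbert A-module over a C*-algebra A and let x ∈ X. Then ρ₊(x, x⟨x, x⟩) = ‖x‖⁴ = ρ₋(x, x⟨x, x⟩); that is, the limit as t → 0 (from either side) of (‖x + t·x⟨x,x⟩‖² − ‖x‖²)/(2t) exists and equals ‖x‖⁴. -/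
open scoped ComplexOrder RightActions
open Filter Topology

private lemma aux_mono {t s r : ℝ} (hs : 0 ≤ s) (hsr : s ≤ r) (ht : |t| * (3 * (r + 1)) ≤ 1) :
    s + 2 * t * s ^ 2 + t ^ 2 * s ^ 3 ≤ r + 2 * t * r ^ 2 + t ^ 2 * r ^ 3 := by
  have hr : 0 ≤ r := hs.trans hsr
  have htr : |t| * r ≤ 1 / 3 := by nlinarith [abs_nonneg t]
  have h1 : (1:ℝ)/3 ≤ 1 + t * (r + s) := by nlinarith [neg_abs_le t, abs_nonneg t]
  have habs : 0 ≤ |t| * r := mul_nonneg (abs_nonneg t) hr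
  have htr2 : t ^ 2 * r ^ 2 ≤ 1 / 9 := by nlinarith [sq_abs t]
  have h2 : t ^ 2 * (r * s) ≤ 1 / 9 := by
    nlinarith [mul_nonneg (mul_nonneg (sq_nonneg t) hr) (sub_nonneg.2 hsr)]
  have h3 : 0 ≤ (1 + t * (r + s)) ^ 2 - t ^ 2 * (r * s) := by nlinarith
  nlinarith [mul_nonneg (sub_nonneg.2 hsr) h3]

private lemma aux_norm {A : Type*} [NonUnitalCStarAlgebra A] [PartialOrder A] [StarOrderedRing A]
    (a : A) (ha : 0 ≤ a) (t : ℝ) (ht : |t| * (3 * (‖a‖ + 1)) ≤ 1) :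
    ‖a + (2 * t) • (a * a) + t ^ 2 • (a * a * a)‖
      = ‖a‖ + 2 * t * ‖a‖ ^ 2 + t ^ 2 * ‖a‖ ^ 3 := by
  have hsa : IsSelfAdjoint a := IsSelfAdjoint.of_nonneg ha
  set r := ‖a‖ with hrdef
  have hr0 : 0 ≤ r := norm_nonneg a
  have hmem : r ∈ quasispectrum ℝ a := by
    obtain ⟨⟨s, hs, hs'⟩, -⟩ := IsGreatest.norm_cfcₙ (id : ℝ → ℝ) a (by fun_prop) rfl hsa
    have hs0 : 0 ≤ s := quasispectrum_nonneg_of_nonneg a ha s hs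
    rw [cfcₙ_id ℝ a] at hs'
    simp only [id_eq, Real.norm_eq_abs, abs_of_nonneg hs0] at hs'
    show ‖a‖ ∈ quasispectrum ℝ a
    exact hs' ▸ hs
  have h2 : cfcₙ (fun s : ℝ => s * s) a = a * a := by
    rw [cfcₙ_mul (fun s : ℝ => s) (fun s : ℝ => s) a, cfcₙ_id' ℝ a]
  have h3 : cfcₙ (fun s : ℝ => s * (s * s)) a = a * (a * a) := by
    rw [cfcₙ_mul (fun s : ℝ => s) (fun s : ℝ => s * s) a, cfcₙ_id' ℝ a, h2]
  have key : a + (2 * t) • (a * a) + t ^ 2 • (a * a * a)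
      = cfcₙ (fun s : ℝ => s + 2 * t * s ^ 2 + t ^ 2 * s ^ 3) a := by
    have e1 : (fun s : ℝ => s + 2 * t * s ^ 2 + t ^ 2 * s ^ 3)
        = fun s : ℝ => (s + 2 * t * (s * s)) + t ^ 2 * (s * (s * s)) := by
      ext s; ring
    have hA : cfcₙ (fun s : ℝ => (s + 2 * t * (s * s)) + t ^ 2 * (s * (s * s))) a
        = cfcₙ (fun s : ℝ => s + 2 * t * (s * s)) a + cfcₙ (fun s : ℝ => t ^ 2 * (s * (s * s))) a :=
      cfcₙ_add _ _ a (by fun_prop) (by simp) (by fun_prop) (by simp)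
    have hB : cfcₙ (fun s : ℝ => s + 2 * t * (s * s)) a
        = cfcₙ (fun s : ℝ => s) a + cfcₙ (fun s : ℝ => 2 * t * (s * s)) a :=
      cfcₙ_add _ _ a (by fun_prop) (by simp) (by fun_prop) (by simp)
    have hC : cfcₙ (fun s : ℝ => 2 * t * (s * s)) a = (2 * t) • cfcₙ (fun s : ℝ => s * s) a :=
      cfcₙ_const_mul _ _ a (by fun_prop) (by simp)
    have hD : cfcₙ (fun s : ℝ => t ^ 2 * (s * (s * s))) a
        = t ^ 2 • cfcₙ (fun s : ℝ => s * (s * s)) a :=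
      cfcₙ_const_mul _ _ a (by fun_prop) (by simp)
    rw [e1, hA, hB, hC, hD, h2, h3, cfcₙ_id' ℝ a, mul_assoc]
  rw [key]
  obtain ⟨⟨s, hs, hs'⟩, hub⟩ :=
    IsGreatest.norm_cfcₙ (fun s : ℝ => s + 2 * t * s ^ 2 + t ^ 2 * s ^ 3) a
      (by fun_prop) (by simp) hsa
  have hfr : 0 ≤ r + 2 * t * r ^ 2 + t ^ 2 * r ^ 3 := by nlinarith [sq_nonneg (1 + t * r)]
  refine le_antisymm ?_ ?_
  · rw [← hs']
    have hs0 : 0 ≤ s := quasispectrum_nonneg_of_nonneg a ha s hs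
    have hsr : s ≤ r := by
      have := norm_apply_le_norm_cfcₙ (id : ℝ → ℝ) a hs (by fun_prop) rfl hsa
      rw [cfcₙ_id ℝ a] at this
      simpa using (le_abs_self s).trans this
    have hfs : 0 ≤ s + 2 * t * s ^ 2 + t ^ 2 * s ^ 3 := by nlinarith [sq_nonneg (1 + t * s)]
    simp only [Real.norm_eq_abs, abs_of_nonneg hfs]
    exact aux_mono hs0 hsr ht
  · have := hub ⟨r, hmem, rfl⟩
    simpa [Real.norm_eq_abs, abs_of_nonneg hfr] using this

/-- The (right) Hilbert C⋆-module class `CStarModule` as it stood in Mathlib of December 2024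
(right action of `Aᵐᵒᵖ`, inner product `A`-linear in the second variable on the right). -/
class RightCStarModule (A : outParam Type*) (E : Type*) [NonUnitalSemiring A] [StarRing A]
    [Module ℂ A] [AddCommGroup E] [Module ℂ E] [PartialOrder A] [SMul Aᵐᵒᵖ E] [Norm A] [Norm E]
    extends Inner A E where
  inner_add_right {x} {y} {z} : inner x (y + z) = inner x y + inner x z
  inner_self_nonneg {x} : 0 ≤ inner x x
  inner_self {x} : inner x x = 0 ↔ x = 0
  inner_op_smul_right {a : A} {x y : E} : inner x (y <• a) = inner x y * a
  inner_smul_right_complex {z : ℂ} {x} {y} : inner x (z • y) = z • inner x y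
  star_inner x y : star (inner x y) = inner y x
  norm_eq_sqrt_norm_inner_self x : ‖x‖ = √‖inner x x‖

namespace RightCStarModule

variable {A E : Type*} [NonUnitalCStarAlgebra A] [PartialOrder A] [StarOrderedRing A]
    [NormedAddCommGroup E] [NormedSpace ℂ E] [SMul Aᵐᵒᵖ E] [RightCStarModule A E]

theorem norm_sq_eq {x : E} : ‖x‖ ^ 2 = ‖inner A x x‖ := by
  rw [norm_eq_sqrt_norm_inner_self (A := A) x, Real.sq_sqrt (norm_nonneg _)]

theorem inner_add_left {x y z : E} : inner A (x + y) z = inner A x z + inner A y z := by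
  rw [← star_inner z (x + y), inner_add_right, star_add, star_inner, star_inner]

theorem inner_smul_right_real {r : ℝ} {x y : E} : inner A x (r • y) = r • inner A x y := by
  rw [← Complex.coe_smul r y, inner_smul_right_complex, Complex.coe_smul]

theorem inner_smul_left_real {r : ℝ} {x y : E} : inner A (r • x) y = r • inner A x y := by
  rw [← star_inner y (r • x), inner_smul_right_real, star_smul, star_trivial, star_inner]

theorem inner_op_smul_left {a : A} {x y : E} : inner A (x <• a) y = star a * inner A x y := by
  rw [← star_inner y (x <• a), inner_op_smul_right, star_mul, star_inner]

end RightCStarModule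

/-- **Theorem 2.6.** For an element `x` of a Hilbert C⋆-module `E` over a C⋆-algebra `A`,
`ρ₊(x, x⟪x, x⟫) = ‖x‖⁴ = ρ₋(x, x⟪x, x⟫)`: the limit of `(‖x + t·x⟪x,x⟫‖² - ‖x‖²)/(2t)`
as `t → 0` from either side exists and equals `‖x‖⁴`. -/
theorem rhoPlusMinus_inner_self_smul
    {A E : Type*} [NonUnitalCStarAlgebra A] [PartialOrder A] [StarOrderedRing A]
    [NormedAddCommGroup E] [NormedSpace ℂ E] [SMul Aᵐᵒᵖ E] [RightCStarModule A E]
    [CompleteSpace E] (x : E) :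
    Tendsto (fun t : ℝ => (‖x + t • (x <• (inner A x x : A))‖ ^ 2 - ‖x‖ ^ 2) / (2 * t))
      (𝓝[>] 0) (𝓝 (‖x‖ ^ 4)) ∧
    Tendsto (fun t : ℝ => (‖x + t • (x <• (inner A x x : A))‖ ^ 2 - ‖x‖ ^ 2) / (2 * t))
      (𝓝[<] 0) (𝓝 (‖x‖ ^ 4)) := by
  set a : A := inner A x x with hadef
  have ha : 0 ≤ a := RightCStarModule.inner_self_nonneg
  have hsa : IsSelfAdjoint a := IsSelfAdjoint.of_nonneg ha
  set r : ℝ := ‖a‖ with hrdef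
  have hrx : ‖x‖ ^ 2 = r := RightCStarModule.norm_sq_eq
  have hrx4 : ‖x‖ ^ 4 = r ^ 2 := by rw [show (4:ℕ) = 2*2 from rfl, pow_mul, hrx]
  have hy : ∀ t : ℝ, (inner A (x + t • (x <• a)) (x + t • (x <• a)) : A)
      = a + (2 * t) • (a * a) + t ^ 2 • (a * a * a) := by
    intro t
    simp only [RightCStarModule.inner_add_left, RightCStarModule.inner_add_right,
      RightCStarModule.inner_smul_left_real, RightCStarModule.inner_smul_right_real,
      RightCStarModule.inner_op_smul_left, RightCStarModule.inner_op_smul_right, hsa.star_eq, ← hadef,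
      smul_smul, add_mul, smul_mul_assoc]
    module
  have hq : ∀ t : ℝ, t ≠ 0 → |t| * (3 * (r + 1)) ≤ 1 →
      (‖x + t • (x <• a)‖ ^ 2 - ‖x‖ ^ 2) / (2 * t) = ‖x‖ ^ 4 + t * r ^ 3 / 2 := by
    intro t ht0 htb
    have h1 : ‖x + t • (x <• a)‖ ^ 2 = r + 2 * t * r ^ 2 + t ^ 2 * r ^ 3 := by
      rw [RightCStarModule.norm_sq_eq, hy t, aux_norm a ha t htb]
    rw [h1, hrx, hrx4]
    field_simp
    ring
  have hball : ∀ᶠ t in 𝓝 (0:ℝ), |t| * (3 * (r + 1)) ≤ 1 := by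
    have hr0 : 0 ≤ r := norm_nonneg a
    have h3 : (0:ℝ) < 3 * (r + 1) := by positivity
    filter_upwards [Metric.ball_mem_nhds (0:ℝ) (by positivity : (0:ℝ) < 1/(3*(r+1)))] with t htm
    rw [Metric.mem_ball, Real.dist_eq, sub_zero] at htm
    calc |t| * (3 * (r + 1)) ≤ (1/(3*(r+1))) * (3 * (r + 1)) := by
          exact mul_le_mul_of_nonneg_right htm.le h3.le
      _ = 1 := by field_simp
  have hg : Tendsto (fun t : ℝ => ‖x‖ ^ 4 + t * r ^ 3 / 2) (𝓝 0) (𝓝 (‖x‖ ^ 4)) := by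
    have : Continuous (fun t : ℝ => ‖x‖ ^ 4 + t * r ^ 3 / 2) := by fun_prop
    simpa using this.tendsto 0
  constructor
  · refine Tendsto.congr' ?_ (hg.mono_left nhdsWithin_le_nhds)
    filter_upwards [hball.filter_mono nhdsWithin_le_nhds, self_mem_nhdsWithin] with t htb ht
    exact (hq t (ne_of_gt ht) htb).symm
  · refine Tendsto.congr' ?_ (hg.mono_left nhdsWithin_le_nhds)
    filter_upwards [hball.filter_mono nhdsWithin_le_nhds, self_mem_nhdsWithin] with t htb ht
    exact (hq t (ne_of_lt ht) htb).symm
end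

section
/- Let X be a Hilbert A-module over a C*-algebra A, let x ∈ X, and let α, β be real numbers with α > 0 and β > 0. Then ‖α·x + β·x⟨x, x⟩‖ = α‖x‖ + β‖x‖³. -/
open scoped ComplexOrder RightActions

/-- The Mathlib (December 2024) definition of `CStarModule`: right `A`-action via `Aᵐᵒᵖ`,
inner product `A`-linear on the right in the second variable. -/
class OldCStarModule (A E : Type*) [NonUnitalSemiring A] [StarRing A]
    [Module ℂ A] [AddCommGroup E] [Module ℂ E] [PartialOrder A] [SMul Aᵐᵒᵖ E] [Norm A] [Norm E]
    extends Inner A E where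
  inner_add_right {x} {y} {z} : inner x (y + z) = inner x y + inner x z
  inner_self_nonneg {x} : 0 ≤ inner x x
  inner_self {x} : inner x x = 0 ↔ x = 0
  inner_op_smul_right {a : A} {x y : E} : inner x (y <• a) = inner x y * a
  inner_smul_right_complex {z : ℂ} {x} {y} : inner x (z • y) = z • inner x y
  star_inner x y : star (inner x y) = inner y x
  norm_eq_sqrt_norm_inner_self x : ‖x‖ = √‖inner x x‖

namespace OldCStarModule

lemma inner_add_left {A E : Type*} [NonUnitalCStarAlgebra A] [PartialOrder A]
    [StarOrderedRing A] [NormedAddCommGroup E] [NormedSpace ℂ E] [SMul Aᵐᵒᵖ E]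
    [OldCStarModule A E] {x y z : E} : inner A (x + y) z = inner A x z + inner A y z := by
  rw [← OldCStarModule.star_inner (A := A) z (x + y), OldCStarModule.inner_add_right, star_add,
    OldCStarModule.star_inner, OldCStarModule.star_inner]

lemma inner_smul_right_real {A E : Type*} [NonUnitalCStarAlgebra A] [PartialOrder A]
    [StarOrderedRing A] [NormedAddCommGroup E] [NormedSpace ℂ E] [SMul Aᵐᵒᵖ E]
    [OldCStarModule A E] {r : ℝ} {x y : E} : inner A x (r • y) = r • inner A x y := by
  have h : r • y = (r : ℂ) • y := (Complex.coe_smul r y).symm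
  rw [h, OldCStarModule.inner_smul_right_complex]
  exact Complex.coe_smul r _

lemma inner_smul_left_real {A E : Type*} [NonUnitalCStarAlgebra A] [PartialOrder A]
    [StarOrderedRing A] [NormedAddCommGroup E] [NormedSpace ℂ E] [SMul Aᵐᵒᵖ E]
    [OldCStarModule A E] {r : ℝ} {x y : E} : inner A (r • x) y = r • inner A x y := by
  rw [← OldCStarModule.star_inner (A := A) y (r • x), inner_smul_right_real,
    ← Complex.coe_smul, star_smul, Complex.star_def, Complex.conj_ofReal, Complex.coe_smul,
    OldCStarModule.star_inner]

lemma inner_op_smul_left {A E : Type*} [NonUnitalCStarAlgebra A] [PartialOrder A]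
    [StarOrderedRing A] [NormedAddCommGroup E] [NormedSpace ℂ E] [SMul Aᵐᵒᵖ E]
    [OldCStarModule A E] {a : A} {x y : E} : inner A (x <• a) y = star a * inner A x y := by
  rw [← OldCStarModule.star_inner (A := A) y (x <• a), OldCStarModule.inner_op_smul_right,
    star_mul, OldCStarModule.star_inner]

lemma norm_sq_eq {A E : Type*} [NonUnitalCStarAlgebra A] [PartialOrder A]
    [StarOrderedRing A] [NormedAddCommGroup E] [NormedSpace ℂ E] [SMul Aᵐᵒᵖ E]
    [OldCStarModule A E] {x : E} : ‖x‖ ^ 2 = ‖inner A x x‖ := by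
  rw [OldCStarModule.norm_eq_sqrt_norm_inner_self (A := A) x, Real.sq_sqrt (norm_nonneg _)]

end OldCStarModule

/-- For a nonnegative element `a` of a nonunital C⋆-algebra, `‖a‖ ∈ σₙ ℝ a`. -/
lemma norm_mem_quasispectrum_of_nonneg' {A : Type*} [NonUnitalCStarAlgebra A]
    [PartialOrder A] [StarOrderedRing A] {a : A} (ha : 0 ≤ a) :
    ‖a‖ ∈ quasispectrum ℝ a := by
  rw [Unitization.quasispectrum_eq_spectrum_inr' ℝ ℂ]
  have h : (0 : Unitization ℂ A) ≤ (a : Unitization ℂ A) :=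
    Unitization.inr_nonneg_iff.mpr ha
  simpa [Unitization.norm_inr] using CStarAlgebra.norm_mem_spectrum_of_nonneg h

/-- Elements of the real quasispectrum are bounded by the norm. -/
lemma abs_le_norm_of_mem_quasispectrum' {A : Type*} [NonUnitalCStarAlgebra A]
    {a : A} {t : ℝ} (ht : t ∈ quasispectrum ℝ a) : |t| ≤ ‖a‖ := by
  rw [Unitization.quasispectrum_eq_spectrum_inr' ℝ ℂ] at ht
  simpa [Unitization.norm_inr] using spectrum.norm_le_norm_of_mem ht

/-- **Theorem 2.7 (generalized Daugavet equation in Hilbert C⋆-modules).**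
For an element `x` of a Hilbert C⋆-module `E` over a C⋆-algebra `A` and positive reals
`α, β`, one has `‖α·x + β·x⟪x, x⟫‖ = α‖x‖ + β‖x‖³`. -/
theorem norm_smul_add_smul_inner_self
    {A E : Type*} [NonUnitalCStarAlgebra A] [PartialOrder A] [StarOrderedRing A]
    [NormedAddCommGroup E] [NormedSpace ℂ E] [SMul Aᵐᵒᵖ E] [OldCStarModule A E]
    [CompleteSpace E] (x : E) (α β : ℝ) (hα : 0 < α) (hβ : 0 < β) :
    ‖α • x + β • (x <• (inner A x x : A))‖ = α * ‖x‖ + β * ‖x‖ ^ 3 := by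
  set a : A := inner A x x with ha
  have ha0 : (0:A) ≤ a := OldCStarModule.inner_self_nonneg
  have hsa : star a = a := OldCStarModule.star_inner x x
  have hsa' : IsSelfAdjoint a := hsa
  set y : E := α • x + β • (x <• a) with hy
  have hyy : (inner A y y : A) = α^2 • a + (2*α*β) • (a*a) + β^2 • (a*a*a) := by
    simp only [hy, OldCStarModule.inner_add_left, OldCStarModule.inner_add_right,
      OldCStarModule.inner_smul_left_real, OldCStarModule.inner_smul_right_real,
      OldCStarModule.inner_op_smul_left, OldCStarModule.inner_op_smul_right, hsa, ← ha,
      smul_mul_assoc, mul_smul_comm, add_mul, mul_assoc]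
    module
  set f : ℝ → ℝ := fun t => α^2 • t + (2*α*β) • (t * t) + β^2 • (t * t * t) with hf
  have hsq : cfcₙ (fun t : ℝ => t * t) a = a * a := by
    rw [cfcₙ_mul _ _ a, cfcₙ_id' ℝ a]
  have hcube : cfcₙ (fun t : ℝ => t * t * t) a = a * a * a := by
    rw [cfcₙ_mul _ _ a, hsq, cfcₙ_id' ℝ a]
  have hcfc : cfcₙ f a = (inner A y y : A) := by
    rw [hyy, hf]
    rw [cfcₙ_add _ _ a, cfcₙ_add _ _ a, cfcₙ_smul _ _ a, cfcₙ_smul _ _ a,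
      cfcₙ_smul _ _ a, hsq, hcube, cfcₙ_id' ℝ a]
  have hnorm_a : ‖a‖ = ‖x‖^2 := by rw [OldCStarModule.norm_sq_eq (A := A)]
  have hmem : ‖a‖ ∈ quasispectrum ℝ a := norm_mem_quasispectrum_of_nonneg' ha0
  have hfnn : ∀ t : ℝ, 0 ≤ t → 0 ≤ f t := by
    intro t ht
    simp only [hf, smul_eq_mul]
    positivity
  have key : ‖cfcₙ f a‖ = f ‖a‖ := by
    apply le_antisymm
    · apply norm_cfcₙ_le
      intro t ht
      have ht0 : 0 ≤ t := quasispectrum_nonneg_of_nonneg a ha0 t ht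
      have ht1 : t ≤ ‖a‖ := (le_abs_self t).trans (abs_le_norm_of_mem_quasispectrum' ht)
      rw [Real.norm_of_nonneg (hfnn t ht0)]
      simp only [hf, smul_eq_mul]
      have hna : (0:ℝ) ≤ ‖a‖ := norm_nonneg a
      gcongr
    · calc f ‖a‖ = ‖f ‖a‖‖ := (Real.norm_of_nonneg (hfnn _ (norm_nonneg a))).symm
        _ ≤ ‖cfcₙ f a‖ := norm_apply_le_norm_cfcₙ f a hmem
  have hyn : ‖y‖ = Real.sqrt ‖(inner A y y : A)‖ :=
    OldCStarModule.norm_eq_sqrt_norm_inner_self y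
  rw [hyn, ← hcfc, key,
    show f ‖a‖ = (α * ‖x‖ + β * ‖x‖ ^ 3)^2 by simp only [hf, smul_eq_mul, hnorm_a]; ring]
  exact Real.sqrt_sq (by positivity)
end

section
/- Let X be a Hilbert A-module over a C*-algebra A and let x ∈ X. Then x is norm-parallel to x⟨x, x⟩, i.e. there exists a complex number ξ with |ξ| = 1 such that ‖x + ξ·x⟨x, x⟩‖ = ‖x‖ + ‖x⟨x, x⟩‖. -/
open scoped ComplexOrder RightActions

/-- The Mathlib class `CStarModule` as it stood in December 2024 (right `A`-action via `Aᵐᵒᵖ`);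
Mathlib's current `CStarModule` uses a left action instead. -/
class CStarModuleRight (A E : Type*) [NonUnitalSemiring A] [StarRing A]
    [Module ℂ A] [AddCommGroup E] [Module ℂ E] [PartialOrder A] [SMul Aᵐᵒᵖ E] [Norm A] [Norm E]
    extends Inner A E where
  inner_add_right {x} {y} {z} : inner x (y + z) = inner x y + inner x z
  inner_self_nonneg {x} : 0 ≤ inner x x
  inner_self {x} : inner x x = 0 ↔ x = 0
  inner_op_smul_right {a : A} {x y : E} : inner x (y <• a) = inner x y * a
  inner_smul_right_complex {z : ℂ} {x} {y} : inner x (z • y) = z • inner x y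
  star_inner x y : star (inner x y) = inner y x
  norm_eq_sqrt_norm_inner_self x : ‖x‖ = √‖inner x x‖

private theorem keyU_aux {B : Type*} [CStarAlgebra B] [PartialOrder B] [StarOrderedRing B]
    (b : B) (hb : 0 ≤ b) :
    ‖b + b*b + b*b + b*b*b‖ = ‖b‖ + 2*‖b‖^2 + ‖b‖^3 := by
  have hsa : IsSelfAdjoint b := .of_nonneg hb
  set f : ℝ → ℝ := fun t => t + t*t + t*t + t*t*t with hf
  have hfc : ContinuousOn f (spectrum ℝ b) := by rw [hf]; fun_prop
  have hcfc : cfc f b = b + b*b + b*b + b*b*b := by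
    rw [hf]
    rw [cfc_add (a := b) (fun t : ℝ => t + t*t + t*t) (fun t : ℝ => t*t*t) (by fun_prop) (by fun_prop),
      cfc_add (a := b) (fun t : ℝ => t + t*t) (fun t : ℝ => t*t) (by fun_prop) (by fun_prop),
      cfc_add (a := b) (fun t : ℝ => t) (fun t : ℝ => t*t) (by fun_prop) (by fun_prop),
      cfc_mul (fun t : ℝ => t*t) (fun t : ℝ => t) b (by fun_prop) (by fun_prop),
      cfc_mul (fun t : ℝ => t) (fun t : ℝ => t) b (by fun_prop) (by fun_prop),
      cfc_id' ℝ b]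
  have hle : ‖b‖ + 2*‖b‖^2 + ‖b‖^3 ≤ ‖b + b*b + b*b + b*b*b‖ := by
    rcases subsingleton_or_nontrivial B with h | h
    · simp [Subsingleton.elim b 0]
    have hmem : ‖b‖ ∈ spectrum ℝ b := CStarAlgebra.norm_mem_spectrum_of_nonneg hb
    have h2 : f ‖b‖ ∈ spectrum ℝ (cfc f b) := by
      rw [cfc_map_spectrum (f := f) (a := b) hsa hfc]
      exact ⟨‖b‖, hmem, rfl⟩
    have h3 := spectrum.norm_le_norm_of_mem h2
    rw [hcfc] at h3
    have hn : (0:ℝ) ≤ ‖b‖ := norm_nonneg b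
    have hfv : f ‖b‖ = ‖b‖ + 2*‖b‖^2 + ‖b‖^3 := by rw [hf]; ring
    rw [hfv, Real.norm_of_nonneg (by positivity)] at h3
    exact h3
  have hge : ‖b + b*b + b*b + b*b*b‖ ≤ ‖b‖ + 2*‖b‖^2 + ‖b‖^3 := by
    calc ‖b + b*b + b*b + b*b*b‖ ≤ ‖b‖ + ‖b*b‖ + ‖b*b‖ + ‖b*b*b‖ := by
          exact (norm_add_le _ _).trans (by gcongr <;> exact (norm_add_le _ _).trans (by gcongr; exact norm_add_le _ _))
      _ ≤ ‖b‖ + 2*‖b‖^2 + ‖b‖^3 := by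
          nlinarith [norm_mul_le b b, norm_mul_le (b*b) b, norm_nonneg b, norm_nonneg (b*b)]
  linarith

private theorem keyU3_aux {B : Type*} [CStarAlgebra B] [PartialOrder B] [StarOrderedRing B]
    (b : B) (hb : 0 ≤ b) : ‖b*b*b‖ = ‖b‖^3 := by
  have hsa : IsSelfAdjoint b := .of_nonneg hb
  set f : ℝ → ℝ := fun t => t*t*t with hf
  have hfc : ContinuousOn f (spectrum ℝ b) := by rw [hf]; fun_prop
  have hcfc : cfc f b = b*b*b := by
    rw [hf, cfc_mul (fun t : ℝ => t*t) (fun t : ℝ => t) b (by fun_prop) (by fun_prop),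
      cfc_mul (fun t : ℝ => t) (fun t : ℝ => t) b (by fun_prop) (by fun_prop), cfc_id' ℝ b]
  have hle : ‖b‖^3 ≤ ‖b*b*b‖ := by
    rcases subsingleton_or_nontrivial B with h | h
    · simp [Subsingleton.elim b 0]
    have hmem : ‖b‖ ∈ spectrum ℝ b := CStarAlgebra.norm_mem_spectrum_of_nonneg hb
    have h2 : f ‖b‖ ∈ spectrum ℝ (cfc f b) := by
      rw [cfc_map_spectrum (f := f) (a := b) hsa hfc]
      exact ⟨‖b‖, hmem, rfl⟩
    have h3 := spectrum.norm_le_norm_of_mem h2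
    rw [hcfc] at h3
    have hfv : f ‖b‖ = ‖b‖^3 := by rw [hf]; ring
    rw [hfv, Real.norm_of_nonneg (by positivity)] at h3
    exact h3
  have hge : ‖b*b*b‖ ≤ ‖b‖^3 := by
    calc ‖b*b*b‖ ≤ ‖b*b‖*‖b‖ := norm_mul_le _ _
      _ ≤ (‖b‖*‖b‖)*‖b‖ := by gcongr; exact norm_mul_le _ _
      _ = ‖b‖^3 := by ring
  linarith

private theorem keyA_aux {A : Type*} [NonUnitalCStarAlgebra A] [PartialOrder A] [StarOrderedRing A]
    (a : A) (ha : 0 ≤ a) :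
    ‖a + a*a + a*a + a*a*a‖ = ‖a‖ + 2*‖a‖^2 + ‖a‖^3 := by
  have h1 := keyU_aux (a : Unitization ℂ A) (Unitization.inr_nonneg_iff.mpr ha)
  simpa only [← Unitization.inr_mul, ← Unitization.inr_add, Unitization.norm_inr] using h1

private theorem keyA3_aux {A : Type*} [NonUnitalCStarAlgebra A] [PartialOrder A] [StarOrderedRing A]
    (a : A) (ha : 0 ≤ a) : ‖a*a*a‖ = ‖a‖^3 := by
  have h1 := keyU3_aux (a : Unitization ℂ A) (Unitization.inr_nonneg_iff.mpr ha)
  simpa only [← Unitization.inr_mul, Unitization.norm_inr] using h1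

private theorem cmr_inner_add_left
    {A E : Type*} [NonUnitalCStarAlgebra A] [PartialOrder A] [StarOrderedRing A]
    [NormedAddCommGroup E] [NormedSpace ℂ E] [SMul Aᵐᵒᵖ E] [CStarModuleRight A E]
    (x y z : E) : (inner A (x + y) z : A) = inner A x z + inner A y z := by
  rw [← CStarModuleRight.star_inner z (x + y), CStarModuleRight.inner_add_right, star_add,
    CStarModuleRight.star_inner, CStarModuleRight.star_inner]

private theorem cmr_inner_op_smul_left
    {A E : Type*} [NonUnitalCStarAlgebra A] [PartialOrder A] [StarOrderedRing A]
    [NormedAddCommGroup E] [NormedSpace ℂ E] [SMul Aᵐᵒᵖ E] [CStarModuleRight A E]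
    (a : A) (x y : E) : (inner A (x <• a) y : A) = star a * inner A x y := by
  rw [← CStarModuleRight.star_inner y (x <• a), CStarModuleRight.inner_op_smul_right, star_mul,
    CStarModuleRight.star_inner]

/-- For an element `x` of a Hilbert C⋆-module `E` over a C⋆-algebra `A`, the element `x` is
norm-parallel to `x⟪x, x⟫`: there is a complex number `ξ` of modulus one with
`‖x + ξ·x⟪x, x⟫‖ = ‖x‖ + ‖x⟪x, x⟫‖`. -/
theorem norm_parallel_inner_self_smul
    {A E : Type*} [NonUnitalCStarAlgebra A] [PartialOrder A] [StarOrderedRing A]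
    [NormedAddCommGroup E] [NormedSpace ℂ E] [SMul Aᵐᵒᵖ E] [CStarModuleRight A E]
    [CompleteSpace E] (x : E) :
    ∃ ξ : ℂ, ‖ξ‖ = 1 ∧
      ‖x + ξ • (x <• (inner A x x : A))‖ = ‖x‖ + ‖x <• (inner A x x : A)‖ := by
  refine ⟨1, by norm_num, ?_⟩
  rw [one_smul]
  set a : A := inner A x x with ha'
  have ha : 0 ≤ a := CStarModuleRight.inner_self_nonneg
  have hstar : star a = a := CStarModuleRight.star_inner x x
  have hinner : (inner A (x + x <• a) (x + x <• a) : A) = a + a*a + a*a + a*a*a := by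
    simp only [cmr_inner_add_left, CStarModuleRight.inner_add_right,
      CStarModuleRight.inner_op_smul_right, cmr_inner_op_smul_left, hstar, ← ha']
    noncomm_ring
  have hinner3 : (inner A (x <• a) (x <• a) : A) = a*a*a := by
    simp only [CStarModuleRight.inner_op_smul_right, cmr_inner_op_smul_left, hstar, ← ha']
  have h1 : ‖x + x <• a‖ = √(‖a‖ + 2*‖a‖^2 + ‖a‖^3) := by
    rw [CStarModuleRight.norm_eq_sqrt_norm_inner_self (A := A) (x := x + x <• a), hinner, keyA_aux a ha]
  have h2 : ‖x‖ = √‖a‖ := by rw [CStarModuleRight.norm_eq_sqrt_norm_inner_self (A := A) (x := x), ← ha']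
  have h3 : ‖x <• a‖ = √(‖a‖^3) := by
    rw [CStarModuleRight.norm_eq_sqrt_norm_inner_self (A := A) (x := x <• a), hinner3, keyA3_aux a ha]
  rw [h1, h2, h3]
  have hr : (0:ℝ) ≤ ‖a‖ := norm_nonneg a
  have hsq : ‖a‖ + 2*‖a‖^2 + ‖a‖^3 = (√‖a‖ + √(‖a‖^3))^2 := by
    have e1 : √‖a‖ * √(‖a‖^3) = ‖a‖^2 := by
      rw [← Real.sqrt_mul hr, show ‖a‖ * ‖a‖^3 = (‖a‖^2)^2 by ring,
        Real.sqrt_sq (by positivity)]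
    rw [add_sq, Real.sq_sqrt hr, Real.sq_sqrt (by positivity), mul_assoc, e1]
  rw [hsq, Real.sqrt_sq (by positivity)]
end

section
/- Let H be a complex Hilbert space and let T be a bounded linear operator on H. Then ‖T + T T* T‖ = ‖T‖ + ‖T‖³. -/
open ContinuousLinearMap RCLike Filter
open scoped InnerProductSpace

private lemma key_bound {H : Type*} [NormedAddCommGroup H] [InnerProductSpace ℂ H]
    [CompleteSpace H] (T : H →L[ℂ] H) (x : H) (hx : ‖x‖ ≤ 1) :
    ‖T x‖ + ‖T x‖ ^ 3 ≤ ‖T + T * ContinuousLinearMap.adjoint T * T‖ := by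
  set S := T + T * ContinuousLinearMap.adjoint T * T with hS
  set A := ContinuousLinearMap.adjoint T with hA
  by_cases h : ‖T x‖ = 0
  · simp [h, norm_nonneg]
  have h0 : 0 < ‖T x‖ := lt_of_le_of_ne (norm_nonneg _) (Ne.symm h)
  have hAx : ‖T x‖ ^ 2 ≤ ‖A (T x)‖ := by
    calc ‖T x‖ ^ 2 = ‖(⟪A (T x), x⟫_ℂ)‖ := by
          rw [hA, ContinuousLinearMap.adjoint_inner_left]
          rw [inner_self_eq_norm_sq_to_K]
          simp
      _ ≤ ‖A (T x)‖ * ‖x‖ := norm_inner_le_norm _ _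
      _ ≤ ‖A (T x)‖ * 1 := by gcongr
      _ = ‖A (T x)‖ := mul_one _
  have hre : re (⟪S x, T x⟫_ℂ) = ‖T x‖ ^ 2 + ‖A (T x)‖ ^ 2 := by
    have h1 : S x = T x + T (A (T x)) := by simp [hS, ContinuousLinearMap.mul_apply]
    rw [h1, inner_add_left]
    have h2 : (⟪T (A (T x)), T x⟫_ℂ) = ⟪A (T x), A (T x)⟫_ℂ := by
      have := ContinuousLinearMap.adjoint_inner_right T (A (T x)) (T x)
      rw [hA]
      rw [← ContinuousLinearMap.adjoint_inner_right]
    rw [h2, inner_self_eq_norm_sq_to_K, inner_self_eq_norm_sq_to_K]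
    simp [← Complex.ofReal_pow]
  have hup : re (⟪S x, T x⟫_ℂ) ≤ ‖S‖ * ‖T x‖ := by
    calc re (⟪S x, T x⟫_ℂ) ≤ ‖S x‖ * ‖T x‖ := re_inner_le_norm _ _
      _ ≤ (‖S‖ * ‖x‖) * ‖T x‖ := by gcongr ?_ * _; exact le_opNorm _ _
      _ ≤ (‖S‖ * 1) * ‖T x‖ := by gcongr
      _ = ‖S‖ * ‖T x‖ := by ring
  have hmain : (‖T x‖ + ‖T x‖ ^ 3) * ‖T x‖ ≤ ‖S‖ * ‖T x‖ := by
    have : ‖T x‖ ^ 2 + (‖T x‖ ^ 2) ^ 2 ≤ ‖S‖ * ‖T x‖ := by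
      nlinarith [hre, hup, hAx, sq_nonneg (‖A (T x)‖ - ‖T x‖ ^ 2), norm_nonneg (A (T x))]
    nlinarith
  exact le_of_mul_le_mul_right hmain h0

/-- **Corollary 2.8 (first part).** For a bounded linear operator `T` on a complex Hilbert
space `H`, `‖T + T T⋆ T‖ = ‖T‖ + ‖T‖³`. -/
theorem norm_add_mul_adjoint_mul_self
    {H : Type*} [NormedAddCommGroup H] [InnerProductSpace ℂ H] [CompleteSpace H]
    (T : H →L[ℂ] H) :
    ‖T + T * ContinuousLinearMap.adjoint T * T‖ = ‖T‖ + ‖T‖ ^ 3 := by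
  set S := T + T * ContinuousLinearMap.adjoint T * T with hS
  refine le_antisymm ?_ ?_
  · calc ‖S‖ ≤ ‖T‖ + ‖T * ContinuousLinearMap.adjoint T * T‖ := norm_add_le _ _
      _ ≤ ‖T‖ + ‖T * ContinuousLinearMap.adjoint T‖ * ‖T‖ := by
          gcongr; exact norm_mul_le _ _
      _ ≤ ‖T‖ + (‖T‖ * ‖ContinuousLinearMap.adjoint T‖) * ‖T‖ := by
          gcongr; exact norm_mul_le _ _
      _ = ‖T‖ + ‖T‖ ^ 3 := by
          rw [ContinuousLinearMap.adjoint.norm_map]; ring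
  · have hev : ∀ᶠ r in nhdsWithin ‖T‖ (Set.Iio ‖T‖), r + r ^ 3 ≤ ‖S‖ := by
      filter_upwards [self_mem_nhdsWithin] with r (hr : r < ‖T‖)
      obtain ⟨x, hx, hxr⟩ := T.exists_lt_apply_of_lt_opNorm hr
      have := key_bound T x hx.le
      nlinarith [sq_nonneg (r + ‖T x‖), sq_nonneg (r - ‖T x‖)]
    have hcont : Tendsto (fun r : ℝ => r + r ^ 3) (nhdsWithin ‖T‖ (Set.Iio ‖T‖))
        (nhds (‖T‖ + ‖T‖ ^ 3)) := by
      apply Tendsto.mono_left _ nhdsWithin_le_nhds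
      exact (Continuous.tendsto (by continuity) _)
    exact le_of_tendsto hcont hev
end

section
/- Let H be a complex Hilbert space and let T be a bounded linear operator on H such that dist(T, K(H)) < ‖T‖, where K(H) is the set of compact operators on H and dist is the operator-norm distance. Then there exists a unit vector x₀ ∈ H such that (1/‖T‖)·T x₀ = (1/‖T T* T‖)·T T* T x₀, ‖T x₀‖ = ‖T‖, and ‖T T* T x₀‖ = ‖T T* T‖. -/
open ContinuousLinearMap Filter Metric Topology

set_option maxHeartbeats 1000000 in
/-- **Corollary 2.8 (second part).** If `T` is a bounded linear operator on a complex Hilbert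
space `H` whose operator-norm distance to the compact operators is less than `‖T‖`, then
there is a unit vector `x₀ ∈ H` with `(1/‖T‖)·T x₀ = (1/‖T T⋆ T‖)·(T T⋆ T) x₀`,
`‖T x₀‖ = ‖T‖` and `‖(T T⋆ T) x₀‖ = ‖T T⋆ T‖`. -/
theorem exists_unit_vector_of_dist_compact_lt_norm
    {H : Type*} [NormedAddCommGroup H] [InnerProductSpace ℂ H] [CompleteSpace H]
    (T : H →L[ℂ] H)
    (hT : Metric.infDist T {S : H →L[ℂ] H | IsCompactOperator S} < ‖T‖) :
    ∃ x₀ : H, ‖x₀‖ = 1 ∧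
      (1 / ‖T‖) • T x₀ =
        (1 / ‖T * ContinuousLinearMap.adjoint T * T‖) •
          (T * ContinuousLinearMap.adjoint T * T) x₀ ∧
      ‖T x₀‖ = ‖T‖ ∧
      ‖(T * ContinuousLinearMap.adjoint T * T) x₀‖ =
        ‖T * ContinuousLinearMap.adjoint T * T‖ := by
  have ha : 0 < ‖T‖ := lt_of_le_of_lt Metric.infDist_nonneg hT
  obtain ⟨K₀, hK₀mem, hK₀d⟩ := (Metric.infDist_lt_iff ⟨(0 : H →L[ℂ] H), by simpa [Set.mem_setOf_eq] using (isCompactOperator_zero : IsCompactOperator (0 : H → H))⟩).mp hT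
  have hK₀ : IsCompactOperator ⇑K₀ := hK₀mem
  set A : H →L[ℂ] H := ContinuousLinearMap.adjoint T * T with hA
  have hAnorm : ‖A‖ = ‖T‖ * ‖T‖ := norm_adjoint_comp_self T
  -- maximizing sequence
  have hu : ∀ n : ℕ, ∃ x : H, ‖x‖ = 1 ∧ ‖T‖ * (1 - 1/(n+1)) < ‖T x‖ := by
    intro n
    have hr : ‖T‖ * (1 - 1/(n+1)) < ‖T‖ := by
      have h1 : (0:ℝ) < 1/((n:ℝ)+1) := by positivity
      nlinarith
    obtain ⟨x, hx1, hx2⟩ := T.exists_lt_apply_of_lt_opNorm hr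
    have hx0 : x ≠ 0 := by
      rintro rfl; simp at hx2
      have h1 : ((n:ℝ)+1)⁻¹ ≤ 1 := by
        rw [inv_le_one_iff₀]; right; linarith [Nat.cast_nonneg (α := ℝ) n]
      nlinarith
    refine ⟨‖x‖⁻¹ • x, ?_, ?_⟩
    · simp [norm_smul, abs_of_nonneg, inv_mul_cancel₀ (norm_ne_zero_iff.mpr hx0)]
    · rw [T.map_smul_of_tower, norm_smul]
      simp only [norm_inv, norm_norm]
      calc ‖T‖ * (1 - 1/(n+1)) < ‖T x‖ := hx2
        _ ≤ ‖x‖⁻¹ * ‖T x‖ := by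
            nlinarith [norm_nonneg (T x), norm_pos_iff.mpr hx0,
              (one_le_inv₀ (norm_pos_iff.mpr hx0)).mpr hx1.le, norm_nonneg x]
  choose u hu1 hu2 using hu
  have hTu_le : ∀ n, ‖T (u n)‖ ≤ ‖T‖ := fun n => T.unit_le_opNorm _ (hu1 n).le
  have hTa : Tendsto (fun n => ‖T (u n)‖) atTop (𝓝 ‖T‖) := by
    have hlo : Tendsto (fun n : ℕ => ‖T‖ * (1 - 1/(n+1))) atTop (𝓝 ‖T‖) := by
      have : Tendsto (fun n : ℕ => 1/((n:ℝ)+1)) atTop (𝓝 0) := by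
        simpa using tendsto_one_div_add_atTop_nhds_zero_nat (𝕜 := ℝ)
      have := (tendsto_const_nhds (x := (1:ℝ))).sub this
      simpa using (tendsto_const_nhds (x := ‖T‖)).mul this
    exact tendsto_of_tendsto_of_tendsto_of_le_of_le hlo tendsto_const_nhds
      (fun n => (hu2 n).le) hTu_le
  -- the eigen-defect sequence tends to 0
  set v : ℕ → H := fun n => A (u n) - ((‖T‖^2 : ℝ) : ℂ) • u n with hv_def
  have hre : ∀ n, RCLike.re (inner (𝕜 := ℂ) (A (u n)) (u n)) = ‖T (u n)‖^2 := by
    intro n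
    have : inner (𝕜 := ℂ) (A (u n)) (u n) = inner (𝕜 := ℂ) (T (u n)) (T (u n)) := by
      rw [hA, ContinuousLinearMap.mul_apply]; exact ContinuousLinearMap.adjoint_inner_left T (u n) (T (u n))
    rw [this, inner_self_eq_norm_sq]
  have hAu_le : ∀ n, ‖A (u n)‖ ≤ ‖T‖^2 := by
    intro n
    calc ‖A (u n)‖ ≤ ‖A‖ := A.unit_le_opNorm _ (hu1 n).le
      _ = ‖T‖^2 := by rw [hAnorm]; ring
  have hkey : ∀ n, ‖v n‖^2 ≤ 2*‖T‖^2*(‖T‖^2 - ‖T (u n)‖^2) := by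
    intro n
    have hexp : ‖v n‖^2 = ‖A (u n)‖^2 - 2*‖T‖^2*‖T (u n)‖^2 + ‖T‖^4 := by
      rw [hv_def]
      rw [norm_sub_sq (𝕜 := ℂ)]
      rw [inner_smul_right]
      have h1 : ‖(((‖T‖^2 : ℝ)) : ℂ) • u n‖ = ‖T‖^2 := by
        rw [norm_smul, hu1 n]; simp [abs_of_nonneg (sq_nonneg ‖T‖)]
      rw [h1]
      have h2 : RCLike.re (((‖T‖^2 : ℝ) : ℂ) * inner ℂ (A (u n)) (u n)) =
          ‖T‖^2 * ‖T (u n)‖^2 := by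
        rw [show ((‖T‖^2:ℝ):ℂ) = RCLike.ofReal (K := ℂ) (‖T‖^2) from rfl, RCLike.re_ofReal_mul, hre n]
      rw [h2]; ring
    have h2 : ‖A (u n)‖^2 ≤ (‖T‖^2)^2 :=
      pow_le_pow_left₀ (norm_nonneg _) (hAu_le n) 2
    nlinarith [sq_nonneg (‖T (u n)‖)]
  have hvsq : Tendsto (fun n => ‖v n‖^2) atTop (𝓝 0) := by
    have hup : Tendsto (fun n => 2*‖T‖^2*(‖T‖^2 - ‖T (u n)‖^2)) atTop (𝓝 0) := by
      have h1 : Tendsto (fun n => ‖T (u n)‖^2) atTop (𝓝 (‖T‖^2)) := hTa.pow 2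
      have := (tendsto_const_nhds (x := ‖T‖^2)).sub h1
      have := (tendsto_const_nhds (x := 2*‖T‖^2)).mul this
      simpa using this
    exact tendsto_of_tendsto_of_tendsto_of_le_of_le tendsto_const_nhds hup
      (fun n => sq_nonneg _) hkey
  have hv : Tendsto v atTop (𝓝 0) := by
    rw [tendsto_zero_iff_norm_tendsto_zero]
    have := (Real.continuous_sqrt.tendsto 0).comp hvsq
    simpa [Function.comp_def, Real.sqrt_sq (norm_nonneg _)] using this
  -- compact part and remainder
  set C : H →L[ℂ] H := ContinuousLinearMap.adjoint T * K₀ with hC_def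
  set R : H →L[ℂ] H := ContinuousLinearMap.adjoint T * (T - K₀) with hR_def
  have hACR : ∀ x : H, A x = C x + R x := by
    intro x
    simp only [hC_def, hR_def, hA, ContinuousLinearMap.mul_apply, map_sub,
      ContinuousLinearMap.sub_apply]
    abel
  have hCc : IsCompactOperator ⇑C := by
    have := hK₀.clm_comp (ContinuousLinearMap.adjoint T)
    exact this
  have hRnorm : ‖R‖ < ‖T‖^2 := by
    calc ‖R‖ ≤ ‖ContinuousLinearMap.adjoint T‖ * ‖T - K₀‖ := norm_mul_le _ _
      _ = ‖T‖ * ‖T - K₀‖ := by rw [LinearIsometryEquiv.norm_map]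
      _ < ‖T‖ * ‖T‖ := by
          have : ‖T - K₀‖ < ‖T‖ := by rwa [dist_eq_norm] at hK₀d
          exact mul_lt_mul_of_pos_left this ha
      _ = ‖T‖^2 := by ring
  -- extract convergent subsequence of C (u n)
  obtain ⟨Kset, hKset, hKsub⟩ :=
    (hCc.image_closedBall_subset_compact (𝕜₁ := ℂ) (f := (C : H →ₗ[ℂ] H)) 1 : _)
  have hmem : ∀ n, C (u n) ∈ Kset := by
    intro n
    apply hKsub
    exact ⟨u n, by simp [Metric.mem_closedBall, dist_zero_right, hu1 n], rfl⟩
  obtain ⟨y, hy, φ, hφ, hCy⟩ := hKset.tendsto_subseq hmem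
  -- invert 1 - r
  have ha2 : ((‖T‖^2 : ℝ) : ℂ) ≠ 0 := by
    exact_mod_cast (by positivity : (‖T‖^2:ℝ) ≠ 0)
  set r : H →L[ℂ] H := ((‖T‖^2 : ℝ) : ℂ)⁻¹ • R with hr_def
  have hrlt : ‖r‖ < 1 := by
    rw [hr_def, norm_smul, norm_inv]
    have h1 : ‖((‖T‖^2 : ℝ) : ℂ)‖ = ‖T‖^2 := by
      simp [Complex.norm_real, abs_of_nonneg (sq_nonneg ‖T‖)]
    rw [h1, inv_mul_lt_iff₀ (by positivity), mul_one]
    exact hRnorm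
  set U := Units.oneSub r hrlt with hU_def
  have hUval : (↑U : H →L[ℂ] H) = 1 - r := rfl
  have hinv : ∀ x : H, (↑U⁻¹ : H →L[ℂ] H) ((1 - r) x) = x := by
    intro x
    calc (↑U⁻¹ : H →L[ℂ] H) ((1 - r) x) = ((↑U⁻¹ * ↑U : H →L[ℂ] H)) x := by
          rw [hUval]; rfl
      _ = x := by rw [U.inv_mul]; rfl
  have hfun : ∀ x : H,
      (1 - r) x = ((‖T‖^2:ℝ):ℂ)⁻¹ • (C x - (A x - ((‖T‖^2:ℝ):ℂ) • x)) := by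
    intro x
    have hRx : R x = A x - C x := by rw [hACR x]; abel
    simp only [ContinuousLinearMap.sub_apply, ContinuousLinearMap.one_apply,
      ContinuousLinearMap.smul_apply, hr_def, hRx, smul_sub]
    rw [smul_smul, inv_mul_cancel₀ ha2, one_smul]
    abel
  have hlim : Tendsto (fun n => (1 - r) (u (φ n))) atTop
      (𝓝 (((‖T‖^2:ℝ):ℂ)⁻¹ • y)) := by
    have h1 : Tendsto (fun n => C (u (φ n)) - v (φ n)) atTop (𝓝 (y - 0)) :=
      hCy.sub (hv.comp hφ.tendsto_atTop)
    have h2 := h1.const_smul (((‖T‖^2:ℝ):ℂ)⁻¹)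
    simp only [sub_zero] at h2
    have heq : (fun n => (1 - r) (u (φ n)))
        = fun n => ((‖T‖^2:ℝ):ℂ)⁻¹ • (C (u (φ n)) - v (φ n)) := by
      funext n; rw [hfun]
    rw [heq]; exact h2
  set x₀ := (↑U⁻¹ : H →L[ℂ] H) (((‖T‖^2:ℝ):ℂ)⁻¹ • y) with hx₀_def
  have hux : Tendsto (fun n => u (φ n)) atTop (𝓝 x₀) := by
    have h := ((↑U⁻¹ : H →L[ℂ] H).continuous.tendsto
      (((‖T‖^2:ℝ):ℂ)⁻¹ • y)).comp hlim
    have h2 : (fun n => u (φ n))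
        = (↑U⁻¹ : H →L[ℂ] H) ∘ (fun n => (1 - r) (u (φ n))) :=
      funext fun n => (hinv _).symm
    rw [h2]; exact h
  have hnorm1 : ‖x₀‖ = 1 := by
    have h1 : Tendsto (fun n => ‖u (φ n)‖) atTop (𝓝 ‖x₀‖) :=
      (continuous_norm.tendsto x₀).comp hux
    have h2 : Tendsto (fun n => ‖u (φ n)‖) atTop (𝓝 1) := by
      simpa [hu1] using (tendsto_const_nhds : Tendsto (fun _ : ℕ => (1:ℝ)) atTop _)
    exact tendsto_nhds_unique h1 h2
  have hTx : ‖T x₀‖ = ‖T‖ := by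
    have h1 : Tendsto (fun n => ‖T (u (φ n))‖) atTop (𝓝 ‖T x₀‖) :=
      ((continuous_norm.comp T.continuous).tendsto x₀).comp hux
    have h2 : Tendsto (fun n => ‖T (u (φ n))‖) atTop (𝓝 ‖T‖) :=
      hTa.comp hφ.tendsto_atTop
    exact tendsto_nhds_unique h1 h2
  have hAx : A x₀ = ((‖T‖^2:ℝ):ℂ) • x₀ := by
    have h1 : Tendsto (fun n => v (φ n)) atTop (𝓝 (A x₀ - ((‖T‖^2:ℝ):ℂ) • x₀)) :=
      ((A.continuous.tendsto x₀).comp hux).sub (hux.const_smul _)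
    have h2 : Tendsto (fun n => v (φ n)) atTop (𝓝 0) := hv.comp hφ.tendsto_atTop
    have h3 := tendsto_nhds_unique h1 h2
    rw [sub_eq_zero] at h3
    exact h3
  -- conclude
  have hB : (T * ContinuousLinearMap.adjoint T * T) x₀ = ((‖T‖^2:ℝ):ℂ) • T x₀ := by
    have h0 : (T * ContinuousLinearMap.adjoint T * T) x₀ = T (A x₀) := by
      rw [hA]
      simp only [ContinuousLinearMap.mul_apply]
    rw [h0, hAx, map_smul]
  have hnc : ‖((‖T‖^2:ℝ):ℂ)‖ = ‖T‖^2 := by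
    simp [Complex.norm_real, abs_of_nonneg (sq_nonneg ‖T‖)]
  have hBx : ‖(T * ContinuousLinearMap.adjoint T * T) x₀‖ = ‖T‖^3 := by
    rw [hB, norm_smul, hnc, hTx]; ring
  have hBnorm : ‖T * ContinuousLinearMap.adjoint T * T‖ = ‖T‖^3 := by
    refine le_antisymm ?_ ?_
    · calc ‖T * ContinuousLinearMap.adjoint T * T‖
          ≤ ‖T * ContinuousLinearMap.adjoint T‖ * ‖T‖ := norm_mul_le _ _
        _ ≤ (‖T‖ * ‖ContinuousLinearMap.adjoint T‖) * ‖T‖ :=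
            mul_le_mul_of_nonneg_right (norm_mul_le _ _) (norm_nonneg _)
        _ = ‖T‖^3 := by rw [LinearIsometryEquiv.norm_map]; ring
    · calc ‖T‖^3 = ‖(T * ContinuousLinearMap.adjoint T * T) x₀‖ := hBx.symm
        _ ≤ ‖T * ContinuousLinearMap.adjoint T * T‖ * ‖x₀‖ := le_opNorm _ _
        _ = ‖T * ContinuousLinearMap.adjoint T * T‖ := by rw [hnorm1, mul_one]
  refine ⟨x₀, hnorm1, ?_, hTx, by rw [hBx, hBnorm]⟩
  rw [hB, hBnorm]
  rw [show ((‖T‖^2:ℝ):ℂ) • T x₀ = (‖T‖^2 : ℝ) • T x₀ from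
    (RCLike.real_smul_eq_coe_smul (K := ℂ) _ _).symm]
  rw [smul_smul]
  congr 1
  field_simp
end

section
/- Let X be a Hilbert A-module over a C*-algebra A and let x, y ∈ X. The following are equivalent: (i) x ⊥ˢ_B y, i.e. ‖x‖ ≤ ‖x + y·a‖ for all a ∈ A; (ii) ρ₋(x, y·a) ≤ 0 for all a ∈ A; (iii) ρ₊(x, y·a) ≥ 0 for all a ∈ A. -/
open scoped ComplexOrder RightActions
open Filter Topology Set

section Aux

variable {F : Type*} [NormedAddCommGroup F] [NormedSpace ℝ F]

private lemma convex_aux (x z : F) :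
    ConvexOn ℝ Set.univ (fun t : ℝ => ‖x + t • z‖ ^ 2) := by
  have h1 : ConvexOn ℝ Set.univ (fun t : ℝ => ‖x + t • z‖) := by
    have h := (convexOn_univ_norm (E := F)).comp_affineMap (AffineMap.lineMap x (x + z))
    have he : (fun t : ℝ => ‖x + t • z‖) = norm ∘ ⇑(AffineMap.lineMap x (x + z)) := by
      funext t
      simp [Function.comp, AffineMap.lineMap_apply, add_sub_cancel_left, add_comm]
    rw [he]
    simpa using h
  have h2 := h1.pow (fun t _ => norm_nonneg _) 2
  exact h2

private lemma slope_mono (x z : F) {s t : ℝ} (hs : s ≠ 0) (ht : t ≠ 0) (hst : s ≤ t) :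
    (‖x + s • z‖ ^ 2 - ‖x‖ ^ 2) / (2 * s) ≤ (‖x + t • z‖ ^ 2 - ‖x‖ ^ 2) / (2 * t) := by
  have h := (convex_aux x z).secant_mono (a := 0) (x := s) (y := t)
    (Set.mem_univ _) (Set.mem_univ _) (Set.mem_univ _) hs ht hst
  simp only [zero_smul, add_zero, sub_zero] at h
  have e : ∀ u : ℝ, (‖x + u • z‖ ^ 2 - ‖x‖ ^ 2) / (2 * u)
      = ((‖x + u • z‖ ^ 2 - ‖x‖ ^ 2) / u) / 2 := by
    intro u; rw [div_div, mul_comm]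
  rw [e s, e t]
  linarith

private lemma rho_plus (x z : F) :
    ∃ L : ℝ, Tendsto (fun t : ℝ => (‖x + t • z‖ ^ 2 - ‖x‖ ^ 2) / (2 * t))
      (𝓝[>] (0:ℝ)) (𝓝 L) ∧
      ∀ t : ℝ, 0 < t → L ≤ (‖x + t • z‖ ^ 2 - ‖x‖ ^ 2) / (2 * t) := by
  set g : ℝ → ℝ := fun t => (‖x + t • z‖ ^ 2 - ‖x‖ ^ 2) / (2 * t) with hg
  have mono : MonotoneOn g (Ioi (0:ℝ)) := fun s hs t ht hst =>
    slope_mono x z (ne_of_gt hs) (ne_of_gt (lt_of_lt_of_le hs hst)) hst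
  have bdd : BddBelow (g '' Ioi (0:ℝ)) := by
    refine ⟨g (-1), ?_⟩
    rintro u ⟨t, ht, rfl⟩
    exact slope_mono x z (by norm_num) (ne_of_gt ht) (by linarith [mem_Ioi.mp ht])
  exact ⟨sInf (g '' Ioi 0), mono.tendsto_nhdsGT bdd,
    fun t ht => csInf_le bdd ⟨t, ht, rfl⟩⟩

private lemma rho_minus (x z : F) :
    ∃ L : ℝ, Tendsto (fun t : ℝ => (‖x + t • z‖ ^ 2 - ‖x‖ ^ 2) / (2 * t))
      (𝓝[<] (0:ℝ)) (𝓝 L) ∧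
      ∀ t : ℝ, t < 0 → (‖x + t • z‖ ^ 2 - ‖x‖ ^ 2) / (2 * t) ≤ L := by
  set g : ℝ → ℝ := fun t => (‖x + t • z‖ ^ 2 - ‖x‖ ^ 2) / (2 * t) with hg
  have mono : MonotoneOn g (Iio (0:ℝ)) := fun s hs t ht hst =>
    slope_mono x z (ne_of_lt hs) (ne_of_lt ht) hst
  have bdd : BddAbove (g '' Iio (0:ℝ)) := by
    refine ⟨g 1, ?_⟩
    rintro u ⟨t, ht, rfl⟩
    exact slope_mono x z (ne_of_lt ht) (by norm_num) (by linarith [mem_Iio.mp ht])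
  exact ⟨sSup (g '' Iio 0), mono.tendsto_nhdsLT bdd,
    fun t ht => le_csSup bdd ⟨t, ht, rfl⟩⟩

end Aux

private lemma smul_op_smul {A E : Type*} [NonUnitalCStarAlgebra A] [PartialOrder A]
    [StarOrderedRing A] [NormedAddCommGroup E] [NormedSpace ℂ E] [SMul Aᵐᵒᵖ E]
    [CStarModuleRight A E] (t : ℝ) (a : A) (y : E) : t • (y <• a) = y <• (t • a) := by
  have hsub : ∀ u v w : E, inner A u (v - w) = inner A u v - inner A u w := by
    intro u v w
    have := CStarModuleRight.inner_add_right (A := A) (x := u) (y := v - w) (z := w)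
    rw [sub_add_cancel] at this
    rw [this, add_sub_cancel_right]
  have h : ∀ u : E, inner A u (t • (y <• a) - y <• (t • a)) = 0 := by
    intro u
    rw [hsub, RCLike.real_smul_eq_coe_smul (K := ℂ) t (y <• a),
      RCLike.real_smul_eq_coe_smul (K := ℂ) t a,
      CStarModuleRight.inner_smul_right_complex,
      CStarModuleRight.inner_op_smul_right, CStarModuleRight.inner_op_smul_right,
      mul_smul_comm, sub_self]
  have h2 := h (t • (y <• a) - y <• (t • a))
  rw [CStarModuleRight.inner_self] at h2
  exact sub_eq_zero.mp h2

/-- **Theorem 3.3.** For elements `x, y` of a Hilbert C⋆-module `E` over a C⋆-algebra `A`,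
the following are equivalent: (i) `x ⊥ˢ_B y`, i.e. `‖x‖ ≤ ‖x + y·a‖` for all `a ∈ A`;
(ii) `ρ₋(x, y·a) ≤ 0` for all `a ∈ A`; (iii) `ρ₊(x, y·a) ≥ 0` for all `a ∈ A`.
(Here `ρ±(x, z)` is the limit of `(‖x + t·z‖² - ‖x‖²)/(2t)` as `t → 0±`, which always
exists; we phrase `ρ₋(x, z) ≤ 0` and `ρ₊(x, z) ≥ 0` by exhibiting the limit.) -/
theorem strongBirkhoffJames_iff_rhoMinus_iff_rhoPlus
    {A E : Type*} [NonUnitalCStarAlgebra A] [PartialOrder A] [StarOrderedRing A]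
    [NormedAddCommGroup E] [NormedSpace ℂ E] [SMul Aᵐᵒᵖ E] [CStarModuleRight A E]
    [CompleteSpace E] (x y : E) :
    ((∀ a : A, ‖x‖ ≤ ‖x + y <• a‖) ↔
      ∀ a : A, ∃ L : ℝ, L ≤ 0 ∧
        Tendsto (fun t : ℝ => (‖x + t • (y <• a)‖ ^ 2 - ‖x‖ ^ 2) / (2 * t))
          (𝓝[<] 0) (𝓝 L)) ∧
    ((∀ a : A, ‖x‖ ≤ ‖x + y <• a‖) ↔
      ∀ a : A, ∃ L : ℝ, 0 ≤ L ∧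
        Tendsto (fun t : ℝ => (‖x + t • (y <• a)‖ ^ 2 - ‖x‖ ^ 2) / (2 * t))
          (𝓝[>] 0) (𝓝 L)) := by
  constructor
  · -- (i) ↔ (ii)
    constructor
    · intro h a
      obtain ⟨L, hT, _⟩ := rho_minus x (y <• a)
      refine ⟨L, ?_, hT⟩
      refine le_of_tendsto hT ?_
      filter_upwards [self_mem_nhdsWithin] with t ht
      have ht' : t < 0 := ht
      have hn : ‖x‖ ≤ ‖x + t • (y <• a)‖ := by
        rw [smul_op_smul]; exact h _
      have h2 : (0:ℝ) ≤ ‖x + t • (y <• a)‖ ^ 2 - ‖x‖ ^ 2 := by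
        nlinarith [norm_nonneg x]
      have h3 : 2 * t < 0 := by linarith
      exact div_nonpos_of_nonneg_of_nonpos h2 h3.le
    · intro h a
      obtain ⟨L, hL0, hT⟩ := h (-a)
      obtain ⟨L', hT', hprop⟩ := rho_minus x (y <• (-a))
      have hLL : L = L' := tendsto_nhds_unique hT hT'
      have hkey := hprop (-1) (by norm_num)
      have heq : x + (-1 : ℝ) • (y <• (-a)) = x + y <• a := by
        rw [smul_op_smul]
        congr 1
        simp
      rw [heq] at hkey
      have h4 : (‖x + y <• a‖ ^ 2 - ‖x‖ ^ 2) / (2 * (-1:ℝ)) ≤ 0 :=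
        hkey.trans (hLL ▸ hL0)
      have h5 : (0:ℝ) ≤ ‖x + y <• a‖ ^ 2 - ‖x‖ ^ 2 := by
        norm_num at h4
        linarith
      nlinarith [norm_nonneg (x + y <• a), norm_nonneg x]
  · -- (i) ↔ (iii)
    constructor
    · intro h a
      obtain ⟨L, hT, _⟩ := rho_plus x (y <• a)
      refine ⟨L, ?_, hT⟩
      refine ge_of_tendsto hT ?_
      filter_upwards [self_mem_nhdsWithin] with t ht
      have ht' : 0 < t := ht
      have hn : ‖x‖ ≤ ‖x + t • (y <• a)‖ := by
        rw [smul_op_smul]; exact h _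
      have h2 : (0:ℝ) ≤ ‖x + t • (y <• a)‖ ^ 2 - ‖x‖ ^ 2 := by
        nlinarith [norm_nonneg x]
      positivity
    · intro h a
      obtain ⟨L, hL0, hT⟩ := h a
      obtain ⟨L', hT', hprop⟩ := rho_plus x (y <• a)
      have hLL : L = L' := tendsto_nhds_unique hT hT'
      have hkey := hprop 1 (by norm_num)
      have heq : x + (1 : ℝ) • (y <• a) = x + y <• a := by rw [one_smul]
      rw [heq] at hkey
      have h4 : (0:ℝ) ≤ (‖x + y <• a‖ ^ 2 - ‖x‖ ^ 2) / (2 * (1:ℝ)) :=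
        (hLL ▸ hL0).trans hkey
      have h5 : (0:ℝ) ≤ ‖x + y <• a‖ ^ 2 - ‖x‖ ^ 2 := by
        norm_num at h4
        linarith
      nlinarith [norm_nonneg (x + y <• a), norm_nonneg x]
end

section
/- Let X be a Hilbert A-module over a C*-algebra A, let x, y ∈ X, and let φ be a state on A with φ(⟨x, x⟩) = ‖x‖². Then Re φ(⟨x, y⟩) ≤ ρ₊(x, y); that is, if L is the limit as t → 0⁺ of (‖x + t·y‖² − ‖x‖²)/(2t), then Re φ(⟨x, y⟩) ≤ L. -/
open scoped ComplexOrder RightActions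
open Filter Topology

/-- If `x, y` are elements of a Hilbert C⋆-module `E` over a C⋆-algebra `A` and `φ` is a
state on `A` with `φ⟪x, x⟫ = ‖x‖²`, then `Re φ⟪x, y⟫ ≤ ρ₊(x, y)`: if `L` is the limit of
`(‖x + t·y‖² - ‖x‖²)/(2t)` as `t → 0⁺`, then `Re φ⟪x, y⟫ ≤ L`. -/
theorem re_state_inner_le_rhoPlus
    {A E : Type*} [NonUnitalCStarAlgebra A] [PartialOrder A] [StarOrderedRing A]
    [NormedAddCommGroup E] [NormedSpace ℂ E] [SMul A E] [CStarModule A E]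
    [CompleteSpace E] (x y : E) (φ : A →L[ℂ] ℂ)
    (hφ_state : ‖φ‖ = 1 ∧ ∀ a : A, 0 ≤ a → 0 ≤ φ a)
    (hφx : φ (inner A x x) = (‖x‖ : ℂ) ^ 2) (L : ℝ)
    (hL : Tendsto (fun t : ℝ => (‖x + t • y‖ ^ 2 - ‖x‖ ^ 2) / (2 * t)) (𝓝[>] 0) (𝓝 L)) :
    (φ (inner A x y)).re ≤ L := by
  obtain ⟨hnorm, hpos⟩ := hφ_state
  -- φ of a selfadjoint element has zero imaginary part
  have him : ∀ a : A, IsSelfAdjoint a → (φ a).im = 0 := by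
    intro a ha
    rw [← CFC.posPart_sub_negPart a ha, map_sub]
    have h1 := Complex.nonneg_iff.mp (hpos _ (CFC.posPart_nonneg a))
    have h2 := Complex.nonneg_iff.mp (hpos _ (CFC.negPart_nonneg a))
    simp [← h1.2, ← h2.2]
  -- Re φ (star a) = Re φ a
  have hre : ∀ a : A, (φ (star a)).re = (φ a).re := by
    intro a
    have hsa : IsSelfAdjoint (Complex.I • (star a - a)) := by
      rw [IsSelfAdjoint, star_smul, star_sub, star_star]
      simp [smul_sub]
      abel
    have := him _ hsa
    rw [map_smul, smul_eq_mul, Complex.mul_im, Complex.I_re, Complex.I_im,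
      map_sub] at this
    simp at this; linarith
  -- pointwise inequality for t > 0
  have key : ∀ᶠ t : ℝ in 𝓝[>] 0,
      (φ (inner A x y)).re ≤ (‖x + t • y‖ ^ 2 - ‖x‖ ^ 2) / (2 * t) := by
    filter_upwards [self_mem_nhdsWithin] with t (ht : 0 < t)
    rw [le_div_iff₀ (by linarith)]
    have expand : (inner A (x + t • y) (x + t • y) : A)
        = inner A x x + t • inner A x y + t • inner A y x + (t * t) • inner A y y := by
      simp [CStarModule.inner_add_left, CStarModule.inner_add_right,
        CStarModule.inner_smul_left_real, CStarModule.inner_smul_right_real,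
        smul_smul]
      abel
    have hb : (φ (inner A (x + t • y) (x + t • y))).re ≤ ‖x + t • y‖ ^ 2 := by
      calc (φ (inner A (x + t • y) (x + t • y))).re
          ≤ ‖φ (inner A (x + t • y) (x + t • y))‖ := Complex.re_le_norm _
        _ ≤ ‖φ‖ * ‖(inner A (x + t • y) (x + t • y) : A)‖ := φ.le_opNorm _
        _ = ‖x + t • y‖ ^ 2 := by rw [hnorm, one_mul, ← CStarModule.norm_sq_eq]
    have hyy : 0 ≤ (φ (inner A y y)).re :=
      (Complex.nonneg_iff.mp (hpos _ CStarModule.inner_self_nonneg)).1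
    have hmap : ∀ (s : ℝ) (a : A), φ (s • a) = (s : ℂ) * φ a := by
      intro s a
      rw [show s • a = (s : ℂ) • a from by simp, map_smul, smul_eq_mul]
    have hxy : (φ (inner A y x)).re = (φ (inner A x y)).re := by
      rw [← CStarModule.star_inner x y, hre]
    have hx2 : (φ (inner A x x)).re = ‖x‖ ^ 2 := by
      rw [hφx]; simp [← Complex.ofReal_pow]
    rw [expand] at hb
    simp only [map_add, hmap, Complex.add_re, Complex.mul_re, Complex.ofReal_re,
      Complex.ofReal_im, zero_mul, sub_zero] at hb
    nlinarith [mul_nonneg (mul_nonneg ht.le ht.le) hyy]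
  exact ge_of_tendsto hL key
end
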